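/- Let p be a real number with 0 ≤ p < 1/2. Define P(N) = ∑_{j=⌊N/2⌋+1}^{N} C(N,j) p^j (1-p)^{N-j} for odd N. Then P is strictly decreasing along odd N (P(N+2) < P(N) for 0 < p < 1/2) and lim_{N→∞, N odd} P(N) = 0. -/

import Mathlib

open Finset Filter

def Tb (p : ℝ) (n r : ℕ) : ℝ :=
  ∑ j ∈ Finset.Icc r n, (n.choose j : ℝ) * p ^ j * (1 - p) ^ (n - j)

lemma Tb_split (p : ℝ) (n r : ℕ) (h : r ≤ n) :
    Tb p n r = (n.choose r : ℝ) * p ^ r * (1 - p) ^ (n - r) + Tb p n (r + 1) := by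
  rw [Tb, Tb, Finset.Icc_eq_cons_Ioc h, Finset.sum_cons, Finset.Icc_add_one_left_eq_Ioc]

lemma Tb_succ (p : ℝ) (n s : ℕ) (hs : s ≤ n) :
    Tb p (n + 1) (s + 1) =
      Tb p n (s + 1) + (n.choose s : ℝ) * p ^ (s + 1) * (1 - p) ^ (n - s) := by
  have hmap : Finset.Icc (s + 1) (n + 1)
      = (Finset.Icc s n).map ⟨fun i => i + 1, add_left_injective 1⟩ := by
    ext x
    simp only [Finset.mem_map, Finset.mem_Icc, Function.Embedding.coeFn_mk]
    constructor
    · rintro ⟨h1, h2⟩; exact ⟨x - 1, by omega, by omega⟩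
    · rintro ⟨i, ⟨h1, h2⟩, rfl⟩; omega
  have key : Tb p (n + 1) (s + 1)
      = p * Tb p n s + (1 - p) * Tb p n (s + 1) := by
    rw [Tb, hmap, Finset.sum_map]
    simp only [Function.Embedding.coeFn_mk, Nat.succ_sub_succ, Nat.choose_succ_succ]
    push_cast
    have step : ∀ i ∈ Finset.Icc s n,
        ((n.choose i : ℝ) + (n.choose (i+1) : ℝ)) * p ^ (i+1) * (1-p) ^ (n-i)
        = p * ((n.choose i : ℝ) * p ^ i * (1-p) ^ (n-i))
          + (1-p) * ((n.choose (i+1) : ℝ) * p ^ (i+1) * (1-p) ^ (n-(i+1))) := by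
      intro i hi
      simp only [Finset.mem_Icc] at hi
      by_cases hin : i = n
      · subst hin
        simp [Nat.choose_succ_self, pow_succ]
        ring
      · have : n - i = (n - (i+1)) + 1 := by omega
        rw [this]
        ring
    rw [Finset.sum_congr rfl step, Finset.sum_add_distrib, ← Finset.mul_sum, ← Finset.mul_sum]
    have hsecond : ∑ i ∈ Finset.Icc s n,
        (n.choose (i+1) : ℝ) * p ^ (i+1) * (1-p) ^ (n-(i+1))
        = Tb p n (s + 1) := by
      have : ∑ i ∈ Finset.Icc s n,
          (n.choose (i+1) : ℝ) * p ^ (i+1) * (1-p) ^ (n-(i+1))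
          = ∑ j ∈ Finset.Icc (s+1) (n+1), (n.choose j : ℝ) * p ^ j * (1-p) ^ (n-j) := by
        rw [hmap, Finset.sum_map]
        simp only [Function.Embedding.coeFn_mk]
      rw [this, Finset.sum_Icc_succ_top (by omega : s + 1 ≤ n + 1)]
      simp [Tb, Nat.choose_succ_self]
    rw [hsecond, Tb, Tb]
  rw [key, Tb_split p n s hs]
  ring

theorem majority_error_anti_and_tendsto_zero (p : ℝ) (hp0 : 0 ≤ p) (hp : p < 1 / 2) :
    (∀ N : ℕ, Odd N → 0 < p →
      ∑ j ∈ Finset.Icc ((N + 2) / 2 + 1) (N + 2),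
          ((N + 2).choose j : ℝ) * p ^ j * (1 - p) ^ (N + 2 - j)
        < ∑ j ∈ Finset.Icc (N / 2 + 1) N, (N.choose j : ℝ) * p ^ j * (1 - p) ^ (N - j)) ∧
    Tendsto (fun k : ℕ =>
        ∑ j ∈ Finset.Icc ((2 * k + 1) / 2 + 1) (2 * k + 1),
          ((2 * k + 1).choose j : ℝ) * p ^ j * (1 - p) ^ (2 * k + 1 - j))
      atTop (nhds 0) := by
  have hq : 0 < 1 - p := by linarith
  constructor
  · rintro N ⟨k, rfl⟩ hp0'
    have e1 : (2 * k + 1) / 2 + 1 = k + 1 := by omega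
    have e2 : (2 * k + 1 + 2) / 2 + 1 = k + 2 := by omega
    rw [e1, e2]
    show Tb p (2 * k + 1 + 2) (k + 2) < Tb p (2 * k + 1) (k + 1)
    have h1 : Tb p (2 * k + 1 + 2) (k + 2)
        = Tb p (2 * k + 2) (k + 2)
          + ((2 * k + 2).choose (k + 1) : ℝ) * p ^ (k + 2) * (1 - p) ^ (k + 1) := by
      have := Tb_succ p (2 * k + 2) (k + 1) (by omega)
      have e : 2 * k + 2 - (k + 1) = k + 1 := by omega
      rw [e] at this
      convert this using 2 <;> omega
    have h2 : Tb p (2 * k + 2) (k + 2)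
        = Tb p (2 * k + 1) (k + 2)
          + ((2 * k + 1).choose (k + 1) : ℝ) * p ^ (k + 2) * (1 - p) ^ k := by
      have := Tb_succ p (2 * k + 1) (k + 1) (by omega)
      have e : 2 * k + 1 - (k + 1) = k := by omega
      rw [e] at this
      convert this using 2 <;> omega
    have h3 : Tb p (2 * k + 1) (k + 1)
        = ((2 * k + 1).choose (k + 1) : ℝ) * p ^ (k + 1) * (1 - p) ^ k
          + Tb p (2 * k + 1) (k + 2) := by
      have := Tb_split p (2 * k + 1) (k + 1) (by omega)
      have e : 2 * k + 1 - (k + 1) = k := by omega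
      rw [e] at this
      exact this
    have hC : ((2 * k + 2).choose (k + 1) : ℝ) = 2 * ((2 * k + 1).choose (k + 1) : ℝ) := by
      have hsym : (2 * k + 1).choose k = (2 * k + 1).choose (k + 1) := by
        have := Nat.choose_symm (show k + 1 ≤ 2 * k + 1 by omega)
        have e : 2 * k + 1 - (k + 1) = k := by omega
        rw [e] at this
        exact this
      have : (2 * k + 2).choose (k + 1) = (2 * k + 1).choose k + (2 * k + 1).choose (k + 1) :=
        Nat.choose_succ_succ (2 * k + 1) k
      rw [this, hsym]
      push_cast
      ring
    have hC1 : 0 < ((2 * k + 1).choose (k + 1) : ℝ) := by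
      exact_mod_cast Nat.choose_pos (show k + 1 ≤ 2 * k + 1 by omega)
    set C : ℝ := ((2 * k + 1).choose (k + 1) : ℝ) with hCdef
    have hA : 0 < C * p ^ (k + 1) * (1 - p) ^ k :=
      mul_pos (mul_pos hC1 (pow_pos hp0' _)) (pow_pos hq _)
    have key : C * p ^ (k + 2) * (1 - p) ^ k
        + (2 * C) * p ^ (k + 2) * (1 - p) ^ (k + 1)
        < C * p ^ (k + 1) * (1 - p) ^ k := by
      have hcert : 0 < (C * p ^ (k + 1) * (1 - p) ^ k) * (1 - p) * (1 - 2 * p) :=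
        mul_pos (mul_pos hA hq) (by linarith)
      have ep : p ^ (k + 2) = p ^ (k + 1) * p := pow_succ p (k + 1)
      have eq' : (1 - p) ^ (k + 1) = (1 - p) ^ k * (1 - p) := pow_succ (1 - p) k
      rw [ep, eq']
      nlinarith [hcert, hA]
    rw [h1, h2, hC]
    linarith [key]
  · apply squeeze_zero (g := fun k : ℕ => 2 * p * (4 * p * (1 - p)) ^ k)
    · intro k
      apply Finset.sum_nonneg
      intro j _
      have := pow_nonneg hp0 j
      have := pow_nonneg hq.le (2 * k + 1 - j)
      positivity
    · intro k
      have e1 : (2 * k + 1) / 2 + 1 = k + 1 := by omega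
      rw [e1]
      have hterm : ∀ j ∈ Finset.Icc (k + 1) (2 * k + 1),
          ((2 * k + 1).choose j : ℝ) * p ^ j * (1 - p) ^ (2 * k + 1 - j)
          ≤ ((2 * k + 1).choose j : ℝ) * (p ^ (k + 1) * (1 - p) ^ k) := by
        intro j hj
        simp only [Finset.mem_Icc] at hj
        have hb : p ^ j * (1 - p) ^ (2 * k + 1 - j) ≤ p ^ (k + 1) * (1 - p) ^ k := by
          set a := j - (k + 1) with ha
          have h1 : p ^ j = p ^ (k + 1) * p ^ a := by
            rw [← pow_add]; congr 1; omega
          have e2 : 2 * k + 1 - j = k - a := by omega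
          have e3 : a + (k - a) = k := by omega
          calc p ^ j * (1 - p) ^ (2 * k + 1 - j)
              = p ^ (k + 1) * (p ^ a * (1 - p) ^ (k - a)) := by rw [h1, e2]; ring
            _ ≤ p ^ (k + 1) * ((1 - p) ^ a * (1 - p) ^ (k - a)) := by
                apply mul_le_mul_of_nonneg_left _ (pow_nonneg hp0 _)
                exact mul_le_mul_of_nonneg_right
                  (pow_le_pow_left₀ hp0 (by linarith) a) (pow_nonneg hq.le _)
            _ = p ^ (k + 1) * (1 - p) ^ k := by rw [← pow_add, e3]
        calc ((2 * k + 1).choose j : ℝ) * p ^ j * (1 - p) ^ (2 * k + 1 - j)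
            = ((2 * k + 1).choose j : ℝ) * (p ^ j * (1 - p) ^ (2 * k + 1 - j)) := by ring
          _ ≤ ((2 * k + 1).choose j : ℝ) * (p ^ (k + 1) * (1 - p) ^ k) :=
              mul_le_mul_of_nonneg_left hb (by positivity)
      calc ∑ j ∈ Finset.Icc (k + 1) (2 * k + 1),
            ((2 * k + 1).choose j : ℝ) * p ^ j * (1 - p) ^ (2 * k + 1 - j)
          ≤ ∑ j ∈ Finset.Icc (k + 1) (2 * k + 1),
            ((2 * k + 1).choose j : ℝ) * (p ^ (k + 1) * (1 - p) ^ k) :=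
            Finset.sum_le_sum hterm
        _ = (∑ j ∈ Finset.Icc (k + 1) (2 * k + 1), ((2 * k + 1).choose j : ℝ))
              * (p ^ (k + 1) * (1 - p) ^ k) := by rw [Finset.sum_mul]
        _ ≤ (2 : ℝ) ^ (2 * k + 1) * (p ^ (k + 1) * (1 - p) ^ k) := by
            apply mul_le_mul_of_nonneg_right _ (by positivity)
            have hsub : ∑ j ∈ Finset.Icc (k + 1) (2 * k + 1), (2 * k + 1).choose j
                ≤ ∑ j ∈ Finset.range (2 * k + 2), (2 * k + 1).choose j := by
              apply Finset.sum_le_sum_of_subset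
              intro x hx
              simp only [Finset.mem_Icc] at hx
              simp only [Finset.mem_range]
              omega
            rw [Nat.sum_range_choose] at hsub
            exact_mod_cast hsub
        _ = 2 * p * (4 * p * (1 - p)) ^ k := by
            have : (2 : ℝ) ^ (2 * k + 1) = 2 * 4 ^ k := by
              rw [pow_succ, pow_mul]; norm_num; ring
            rw [this, mul_pow, mul_pow, pow_succ]
            ring
    · have hr0 : 0 ≤ 4 * p * (1 - p) := by positivity
      have hr1 : 4 * p * (1 - p) < 1 := by nlinarith [sq_nonneg (1 - 2 * p)]
      have := (tendsto_pow_atTop_nhds_zero_of_lt_one hr0 hr1).const_mul (2 * p)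
      simpa using this
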